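/- arXiv:math/0606095 — 4 statements merged into one kernel-verified Lean document; each statement's English description precedes it below -/
import Mathlib

section
/- Let (V,g,J) be a Hermitian vector space and let λ^pV ⊗₁ λ^qV be the space of tensors Q: λ^pV → λ^qV satisfying [(𝕁Q)(X₁,…,X_p)](Y₁,…,Y_q) = -[𝕁(Q(X₁,…,X_p))](Y₁,…,Y_q), where 𝕁 acts on λ^rV as r^{-1}𝒥. Then the image of the total antisymmetrisation map a restricted to λ^pV ⊗₁ λ^qV is contained in λ^{p,q}V. -/
noncomputable section
open scoped BigOperators RealInnerProductSpace

variable {V : Type*} [NormedAddCommGroup V] [InnerProductSpace ℝ V]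

/-- Derivation extension 𝒥 of `J` acting on `p`-multilinear functions:
`(𝒥α)(v₁,…,v_p) = Σ_k α(v₁,…,Jv_k,…,v_p)`. -/
def calJ (J : V →ₗ[ℝ] V) {p : ℕ} {W : Type*} [AddCommGroup W] [Module ℝ W]
    (α : (Fin p → V) → W) : (Fin p → V) → W :=
  fun v => ∑ k, α (Function.update v k (J (v k)))

/-- The total antisymmetrisation `a(Q)` of a tensor `Q : λ^pV → λ^qV`,
as a `(p+q)`-multilinear function. -/
def totalAlt (p q : ℕ) (Q : (Fin p → V) → AlternatingMap ℝ V ℝ (Fin q)) :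
    (Fin (p + q) → V) → ℝ :=
  fun v => ∑ σ : Equiv.Perm (Fin (p + q)),
    ((Equiv.Perm.sign σ : ℤ) : ℝ) *
      Q (fun i => v (σ (Fin.castAdd q i))) (fun j => v (σ (Fin.natAdd p j)))

section Conditions

variable (J : V →ₗ[ℝ] V)

/-- `Q` has arguments of type `λ^p`:  `𝒥²` applied in the arguments is `-p²`. -/
def ArgTypeP (p q : ℕ) (Q : AlternatingMap ℝ V (AlternatingMap ℝ V ℝ (Fin q)) (Fin p)) : Prop :=
  calJ J (calJ J ⇑Q) = (-((p : ℝ)) ^ 2) • ⇑Q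

/-- `Q` has values in `λ^qV`:  each value is in the `-q²`-eigenspace of `𝒥²`. -/
def ValTypeP (p q : ℕ) (Q : AlternatingMap ℝ V (AlternatingMap ℝ V ℝ (Fin q)) (Fin p)) : Prop :=
  ∀ v : Fin p → V, calJ J (calJ J ⇑(Q v)) = (-((q : ℝ)) ^ 2) • ⇑(Q v)

/-- `Q ∈ λ^pV ⊗₁ λ^qV`:  `𝕁` applied in the arguments equals minus `𝕁` applied to the
values, where `𝕁` acts on `λ^rV` as `r⁻¹𝒥`.  (Cleared of denominators.) -/
def AntiCommJ (p q : ℕ) (Q : AlternatingMap ℝ V (AlternatingMap ℝ V ℝ (Fin q)) (Fin p)) : Prop :=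
  ∀ v : Fin p → V, (q : ℝ) • ⇑(calJ J (⇑Q) v) = (-(p : ℝ)) • calJ J ⇑(Q v)

/-- `Q ∈ λ^pV ⊗₂ λ^qV`:  `Q` commutes with `𝕁`. -/
def CommJ (p q : ℕ) (Q : AlternatingMap ℝ V (AlternatingMap ℝ V ℝ (Fin q)) (Fin p)) : Prop :=
  ∀ v : Fin p → V, (q : ℝ) • ⇑(calJ J (⇑Q) v) = ((p : ℝ)) • calJ J ⇑(Q v)

end Conditions

/-!
STATEMENT 1: the image of the total antisymmetrisation map `a` restricted to
`λ^pV ⊗₁ λ^qV` is contained in `λ^{p,q}V` (the `-(p-q)²`-eigenspace of `𝒥²`).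
-/
/- ==== auxiliary ==== -/
set_option linter.unusedSectionVars false

lemma altSum_apply {q : ℕ} {α : Type*} (s : Finset α)
    (f : α → AlternatingMap ℝ V ℝ (Fin q)) (w : Fin q → V) :
    (∑ a ∈ s, f a) w = ∑ a ∈ s, f a w := by
  classical
  induction s using Finset.cons_induction with
  | empty => simp
  | cons a s ha ih => rw [Finset.sum_cons, Finset.sum_cons, AlternatingMap.add_apply, ih]

section Aux
variable (J : V →ₗ[ℝ] V) (p q : ℕ)

def cA (f : (Fin p → V) → (Fin q → V) → ℝ) : (Fin p → V) → (Fin q → V) → ℝ :=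
  fun u w => ∑ k, f (Function.update u k (J (u k))) w

def cB (f : (Fin p → V) → (Fin q → V) → ℝ) : (Fin p → V) → (Fin q → V) → ℝ :=
  fun u w => ∑ k, f u (Function.update w k (J (w k)))

def TT (f : (Fin p → V) → (Fin q → V) → ℝ) : (Fin (p + q) → V) → ℝ :=
  fun v => ∑ σ : Equiv.Perm (Fin (p + q)),
    ((Equiv.Perm.sign σ : ℤ) : ℝ) *
      f (fun i => v (σ (Fin.castAdd q i))) (fun j => v (σ (Fin.natAdd p j)))

lemma upd_ll (σ : Equiv.Perm (Fin (p + q))) (v : Fin (p + q) → V) (i₀ : Fin p) (x : V) :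
    (fun i => Function.update v (σ (Fin.castAdd q i₀)) x (σ (Fin.castAdd q i))) =
      Function.update (fun i => v (σ (Fin.castAdd q i))) i₀ x := by
  funext i
  rcases eq_or_ne i i₀ with h | h
  · subst h; simp
  · rw [Function.update_of_ne h, Function.update_of_ne]
    intro hc
    have := congrArg Fin.val (σ.injective hc)
    simp only [Fin.coe_castAdd] at this
    exact h (Fin.ext this)

lemma upd_lr (σ : Equiv.Perm (Fin (p + q))) (v : Fin (p + q) → V) (i₀ : Fin p) (x : V) :
    (fun j => Function.update v (σ (Fin.castAdd q i₀)) x (σ (Fin.natAdd p j))) =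
      fun j => v (σ (Fin.natAdd p j)) := by
  funext j
  rw [Function.update_of_ne]
  intro hc
  have := congrArg Fin.val (σ.injective hc)
  simp only [Fin.coe_castAdd, Fin.coe_natAdd] at this
  have := i₀.isLt
  omega

lemma upd_rl (σ : Equiv.Perm (Fin (p + q))) (v : Fin (p + q) → V) (j₀ : Fin q) (x : V) :
    (fun i => Function.update v (σ (Fin.natAdd p j₀)) x (σ (Fin.castAdd q i))) =
      fun i => v (σ (Fin.castAdd q i)) := by
  funext i
  rw [Function.update_of_ne]
  intro hc
  have := congrArg Fin.val (σ.injective hc)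
  simp only [Fin.coe_castAdd, Fin.coe_natAdd] at this
  have := i.isLt
  omega

lemma upd_rr (σ : Equiv.Perm (Fin (p + q))) (v : Fin (p + q) → V) (j₀ : Fin q) (x : V) :
    (fun j => Function.update v (σ (Fin.natAdd p j₀)) x (σ (Fin.natAdd p j))) =
      Function.update (fun j => v (σ (Fin.natAdd p j))) j₀ x := by
  funext j
  rcases eq_or_ne j j₀ with h | h
  · subst h; simp
  · rw [Function.update_of_ne h, Function.update_of_ne]
    intro hc
    have := congrArg Fin.val (σ.injective hc)
    simp only [Fin.coe_natAdd] at this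
    refine h (Fin.ext ?_)
    omega

lemma calJ_TT (f : (Fin p → V) → (Fin q → V) → ℝ) :
    calJ J (TT p q f) = fun v => TT p q (cA J p q f) v + TT p q (cB J p q f) v := by
  funext v
  simp only [calJ, TT, cA, cB]
  rw [Finset.sum_comm, ← Finset.sum_add_distrib]
  refine Finset.sum_congr rfl fun σ _ => ?_
  have := (Equiv.sum_comp (finSumFinEquiv.trans (σ : Equiv.Perm (Fin (p + q)))
    : Fin p ⊕ Fin q ≃ Fin (p + q))
    (fun k => ((Equiv.Perm.sign σ : ℤ) : ℝ) *
      f (fun i => Function.update v k (J (v k)) (σ (Fin.castAdd q i)))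
        (fun j => Function.update v k (J (v k)) (σ (Fin.natAdd p j))))).symm
  rw [this, Fintype.sum_sum_type]
  simp only [Equiv.trans_apply, finSumFinEquiv_apply_left, finSumFinEquiv_apply_right]
  rw [Finset.mul_sum, Finset.mul_sum]
  congr 1
  · refine Finset.sum_congr rfl fun i₀ _ => ?_
    rw [upd_ll, upd_lr]
  · refine Finset.sum_congr rfl fun j₀ _ => ?_
    rw [upd_rl, upd_rr]

lemma TT_smul (c : ℝ) (f : (Fin p → V) → (Fin q → V) → ℝ) (v) :
    TT p q (fun u w => c * f u w) v = c * TT p q f v := by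
  simp only [TT, Finset.mul_sum]
  exact Finset.sum_congr rfl fun σ _ => by ring

lemma cAB_comm (f : (Fin p → V) → (Fin q → V) → ℝ) :
    cA J p q (cB J p q f) = cB J p q (cA J p q f) := by
  funext u w
  simp only [cA, cB]
  rw [Finset.sum_comm]

end Aux


theorem totalAlt_mem_lambdaPQ_of_antiCommJ
    {n : ℕ} (hdim : Module.finrank ℝ V = 2 * n)
    (J : V →ₗ[ℝ] V) (hJ2 : ∀ v, J (J v) = -v)
    (hJg : ∀ u v : V, ⟪J u, J v⟫ = ⟪u, v⟫)
    (p q : ℕ) (Q : AlternatingMap ℝ V (AlternatingMap ℝ V ℝ (Fin q)) (Fin p))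
    (harg : ArgTypeP J p q Q) (hval : ValTypeP J p q Q) (hanti : AntiCommJ J p q Q) :
    calJ J (calJ J (totalAlt p q ⇑Q)) = (-(((p : ℝ) - q) ^ 2)) • totalAlt p q ⇑Q := by
  classical
  set f : (Fin p → V) → (Fin q → V) → ℝ := fun u w => Q u w with hf
  have hTf : totalAlt p q ⇑Q = TT p q f := rfl
  -- cA f in terms of calJ
  have hAapp : ∀ u w, cA J p q f u w = calJ J (⇑Q) u w := by
    intro u w
    simp only [cA, calJ, hf, altSum_apply]
  have hBapp : ∀ u w, cB J p q f u w = calJ J ⇑(Q u) w := fun u w => rfl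
  -- cA² = -p²
  have hA2 : cA J p q (cA J p q f) = fun u w => (-((p : ℝ)) ^ 2) * f u w := by
    funext u w
    have h1 : cA J p q (cA J p q f) u w = calJ J (calJ J ⇑Q) u w := by
      simp only [cA, calJ, hf, altSum_apply]
    rw [h1, harg]
    simp [hf, smul_eq_mul]
  -- cB² = -q²
  have hB2 : cB J p q (cB J p q f) = fun u w => (-((q : ℝ)) ^ 2) * f u w := by
    funext u w
    have h1 : cB J p q (cB J p q f) u w = calJ J (calJ J ⇑(Q u)) w := rfl
    rw [h1, hval u]
    simp [hf, smul_eq_mul]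
  -- anti-commutation in cA/cB form
  have hanti' : ∀ u w, (q : ℝ) * cA J p q f u w = (-(p : ℝ)) * cB J p q f u w := by
    intro u w
    have := congrFun (hanti u) w
    simp only [Pi.smul_apply, smul_eq_mul] at this
    rw [hAapp, hBapp]
    exact this
  -- cross term
  have hcross : cA J p q (cB J p q f) = fun u w => ((p : ℝ) * q) * f u w := by
    rcases eq_or_ne q 0 with hq | hq
    · subst hq
      funext u w
      have hB0 : cB J p 0 f = fun _ _ => 0 := by
        funext u w; simp [cB]
      simp [cA, hB0]
    · have hq' : (q : ℝ) ≠ 0 := Nat.cast_ne_zero.mpr hq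
      funext u w
      have key : (q : ℝ) * cA J p q (cB J p q f) u w = (q : ℝ) * (((p : ℝ) * q) * f u w) := by
        rw [cAB_comm]
        have h1 : (q : ℝ) * cB J p q (cA J p q f) u w
            = (-(p : ℝ)) * cB J p q (cB J p q f) u w := by
          show (q : ℝ) * ∑ k, cA J p q f u (Function.update w k (J (w k)))
            = (-(p : ℝ)) * ∑ k, cB J p q f u (Function.update w k (J (w k)))
          rw [Finset.mul_sum, Finset.mul_sum]
          exact Finset.sum_congr rfl fun k _ => hanti' u _
        rw [h1, hB2]
        ring
      exact mul_left_cancel₀ hq' key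
  have hcross' : cB J p q (cA J p q f) = fun u w => ((p : ℝ) * q) * f u w := by
    rw [← cAB_comm, hcross]
  -- assemble
  have step1 : calJ J (totalAlt p q ⇑Q)
      = fun v => TT p q (cA J p q f) v + TT p q (cB J p q f) v := by
    rw [hTf, calJ_TT]
  have calJ_add : ∀ (g h : (Fin (p + q) → V) → ℝ),
      calJ J (fun v => g v + h v) = fun v => calJ J g v + calJ J h v := by
    intro g h
    funext v
    simp [calJ, Finset.sum_add_distrib]
  funext v
  rw [step1, calJ_add, calJ_TT, calJ_TT]
  rw [hA2, hB2, hcross, hcross']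
  simp only [Pi.smul_apply, smul_eq_mul, hTf, TT_smul]
  ring
end
end

section
/- Let (V,g,J) be a Hermitian vector space and let λ^pV ⊗₂ λ^qV be the space of tensors Q: λ^pV → λ^qV commuting with 𝕁 (i.e., Q∘𝕁 = 𝕁∘Q). Then the image of the total antisymmetrisation map a restricted to λ^pV ⊗₂ λ^qV is contained in λ^{p+q}V. -/
noncomputable section
open scoped BigOperators RealInnerProductSpace

variable {V : Type*} [NormedAddCommGroup V] [InnerProductSpace ℝ V]

def totalAltC (p q : ℕ) (R : (Fin p → V) → (Fin q → V) → ℝ) : (Fin (p + q) → V) → ℝ :=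
  fun v => ∑ σ : Equiv.Perm (Fin (p + q)),
    ((Equiv.Perm.sign σ : ℤ) : ℝ) *
      R (fun i => v (σ (Fin.castAdd q i))) (fun j => v (σ (Fin.natAdd p j)))

section Aux
variable (J : V →ₗ[ℝ] V)

lemma alt_sum_apply {q : ℕ} {α : Type*} (s : Finset α)
    (f : α → AlternatingMap ℝ V ℝ (Fin q)) (u : Fin q → V) :
    (∑ i ∈ s, f i) u = ∑ i ∈ s, f i u := by
  classical
  induction s using Finset.induction with
  | empty => simp
  | insert _ _ h ih => simp [Finset.sum_insert h, ih]

lemma calJ_add {p : ℕ} {W : Type*} [AddCommGroup W] [Module ℝ W]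
    (α β : (Fin p → V) → W) (v : Fin p → V) :
    calJ J (fun x => α x + β x) v = calJ J α v + calJ J β v := by
  simp [calJ, Finset.sum_add_distrib]

lemma calJ_smul {p : ℕ} (c : ℝ) (α : (Fin p → V) → ℝ) (v : Fin p → V) :
    calJ J (c • α) v = c * calJ J α v := by
  simp [calJ, Finset.mul_sum]

lemma calJ_apply_alt {p q : ℕ} (α : (Fin p → V) → AlternatingMap ℝ V ℝ (Fin q))
    (w : Fin p → V) (u : Fin q → V) :
    calJ J α w u = calJ J (fun w' => α w' u) w := by
  simp [calJ, alt_sum_apply]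

lemma calJ_split {p q : ℕ} (σ : Equiv.Perm (Fin (p + q)))
    (R : (Fin p → V) → (Fin q → V) → ℝ) (v : Fin (p + q) → V) :
    calJ J (fun x => R (fun i => x (σ (Fin.castAdd q i))) (fun j => x (σ (Fin.natAdd p j)))) v
      = calJ J (fun w => R w (fun j => v (σ (Fin.natAdd p j)))) (fun i => v (σ (Fin.castAdd q i)))
        + calJ J (R (fun i => v (σ (Fin.castAdd q i)))) (fun j => v (σ (Fin.natAdd p j))) := by
  unfold calJ
  rw [← Equiv.sum_comp σ
    (fun k => R (fun i => Function.update v k (J (v k)) (σ (Fin.castAdd q i)))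
      (fun j => Function.update v k (J (v k)) (σ (Fin.natAdd p j))))]
  rw [Fin.sum_univ_add]
  congr 1
  · refine Finset.sum_congr rfl fun i _ => ?_
    congr 1
    · funext i'
      rcases eq_or_ne i' i with rfl | h
      · simp
      · rw [Function.update_of_ne (σ.injective.ne (by simpa using h)),
          Function.update_of_ne h]
    · funext j
      exact Function.update_of_ne (σ.injective.ne (by simp [Fin.ext_iff]; omega)) _ _
  · refine Finset.sum_congr rfl fun j _ => ?_
    congr 1
    · funext i
      exact Function.update_of_ne (σ.injective.ne (by simp [Fin.ext_iff]; omega)) _ _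
    · funext j'
      rcases eq_or_ne j' j with rfl | h
      · simp
      · have h' : (j' : ℕ) ≠ (j : ℕ) := fun hh => h (Fin.ext hh)
        rw [Function.update_of_ne (σ.injective.ne (by simp [Fin.ext_iff]; omega)),
          Function.update_of_ne h]

lemma totalAltC_congr {p q : ℕ} {R R' : (Fin p → V) → (Fin q → V) → ℝ}
    (h : ∀ w u, R w u = R' w u) : totalAltC p q R = totalAltC p q R' := by
  funext v
  exact Finset.sum_congr rfl fun σ _ => by rw [h]

lemma calJ_totalAltC {p q : ℕ} (R : (Fin p → V) → (Fin q → V) → ℝ) :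
    calJ J (totalAltC p q R)
      = totalAltC p q (fun w u => calJ J (fun w' => R w' u) w + calJ J (R w) u) := by
  funext v
  have h : calJ J (totalAltC p q R) v
      = ∑ σ : Equiv.Perm (Fin (p + q)), ((Equiv.Perm.sign σ : ℤ) : ℝ) *
          calJ J (fun x => R (fun i => x (σ (Fin.castAdd q i)))
            (fun j => x (σ (Fin.natAdd p j)))) v := by
    simp only [calJ, totalAltC, Finset.mul_sum]
    exact Finset.sum_comm
  rw [h]
  exact Finset.sum_congr rfl fun σ _ => by rw [calJ_split]

lemma calJ_swap {p q : ℕ} (R : (Fin p → V) → (Fin q → V) → ℝ) (w : Fin p → V) (u : Fin q → V) :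
    calJ J (fun u' => calJ J (fun w' => R w' u') w) u
      = calJ J (fun w' => calJ J (R w') u) w := by
  simp only [calJ]
  exact Finset.sum_comm

end Aux

theorem main_test
    (J : V →ₗ[ℝ] V)
    (p q : ℕ) (Q : AlternatingMap ℝ V (AlternatingMap ℝ V ℝ (Fin q)) (Fin p))
    (harg : calJ J (calJ J ⇑Q) = (-((p : ℝ)) ^ 2) • ⇑Q)
    (hval : ∀ v : Fin p → V, calJ J (calJ J ⇑(Q v)) = (-((q : ℝ)) ^ 2) • ⇑(Q v))
    (hcomm : ∀ v : Fin p → V, (q : ℝ) • ⇑(calJ J (⇑Q) v) = ((p : ℝ)) • calJ J ⇑(Q v)) :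
    calJ J (calJ J (totalAltC p q (fun w u => Q w u))) = (-(((p : ℝ) + q) ^ 2)) • totalAltC p q (fun w u => Q w u) := by
  classical
  rw [calJ_totalAltC, calJ_totalAltC]
  have hsmul : (-(((p : ℝ) + q) ^ 2)) • totalAltC p q (fun w u => Q w u)
      = totalAltC p q (fun w u => (-(((p : ℝ) + q) ^ 2)) * Q w u) := by
    funext v
    simp only [Pi.smul_apply, smul_eq_mul, totalAltC, Finset.mul_sum]
    exact Finset.sum_congr rfl fun σ _ => by ring
  rw [hsmul]
  apply totalAltC_congr
  intro w u
  simp only [calJ_add]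
  have key : calJ J (calJ J ⇑Q) w u = calJ J (calJ J fun w' => (Q w') u) w := by
    rw [calJ_apply_alt]
    congr 1
    funext w'
    rw [calJ_apply_alt]
  have e1 : calJ J (calJ J fun w' => (Q w') u) w = -(p : ℝ) ^ 2 * (Q w) u := by
    rw [← key, harg]
    simp
  have e4 : calJ J (calJ J fun u' => (Q w) u') u = -(q : ℝ) ^ 2 * (Q w) u := by
    have h := congrFun (hval w) u
    simpa using h
  have e3 : calJ J (fun x => calJ J (fun w' => (Q w') x) w) u
      = calJ J (fun x => calJ J (fun u' => (Q x) u') u) w :=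
    calJ_swap J (fun a b => (Q a) b) w u
  have hM : calJ J (fun x => calJ J (fun u' => (Q x) u') u) w
      = calJ J ⇑(calJ J ⇑Q w) u := by
    simp only [calJ, alt_sum_apply]
    exact Finset.sum_comm
  rcases eq_or_ne q 0 with hq | hq
  · subst hq
    have e2 : calJ J (fun x => calJ J (fun u' => (Q x) u') u) w = 0 := by
      simp [calJ]
    rw [e1, e3, e2, e4]
    push_cast
    ring
  · have hqR : (q : ℝ) ≠ 0 := Nat.cast_ne_zero.mpr hq
    have h1 : (q : ℝ) * calJ J ⇑(calJ J ⇑Q w) u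
        = (p : ℝ) * calJ J (calJ J ⇑(Q w)) u := by
      rw [← calJ_smul J, ← calJ_smul J, hcomm w]
    have h2 : calJ J (calJ J ⇑(Q w)) u = -(q : ℝ) ^ 2 * (Q w) u := by
      have h := congrFun (hval w) u
      simpa using h
    have e2 : calJ J (fun x => calJ J (fun u' => (Q x) u') u) w
        = -((p : ℝ) * q) * (Q w) u := by
      rw [hM]
      apply mul_left_cancel₀ hqR
      rw [h1, h2]
      ring
    rw [e1, e3, e2, e4]
    push_cast
    ring

/-!
STATEMENT 2: the image of the total antisymmetrisation map `a` restricted to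
`λ^pV ⊗₂ λ^qV` (tensors commuting with `𝕁`) is contained in `λ^{p+q}V`
(the `-(p+q)²`-eigenspace of `𝒥²`).
-/
theorem totalAlt_mem_lambdaTop_of_commJ
    {n : ℕ} (hdim : Module.finrank ℝ V = 2 * n)
    (J : V →ₗ[ℝ] V) (hJ2 : ∀ v, J (J v) = -v)
    (hJg : ∀ u v : V, ⟪J u, J v⟫ = ⟪u, v⟫)
    (p q : ℕ) (Q : AlternatingMap ℝ V (AlternatingMap ℝ V ℝ (Fin q)) (Fin p))
    (harg : ArgTypeP J p q Q) (hval : ValTypeP J p q Q) (hcomm : CommJ J p q Q) :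
    calJ J (calJ J (totalAlt p q ⇑Q)) = (-(((p : ℝ) + q) ^ 2)) • totalAlt p q ⇑Q := by
  have hQ : totalAlt p q ⇑Q = totalAltC p q (fun w u => (Q w) u) := rfl
  rw [hQ]
  exact main_test J p q Q harg hval hcomm
end
end

section
/- Let (V,g,J) be a Hermitian vector space and p ≠ q. Then the total antisymmetrisation map a: λ^pV ⊗₁ λ^qV → Λ^{p+q}V is injective. -/
noncomputable section
open scoped BigOperators RealInnerProductSpace

variable {V : Type*} [NormedAddCommGroup V] [InnerProductSpace ℝ V]

set_option linter.unusedSectionVars false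
set_option linter.unreachableTactic false
set_option linter.unusedTactic false

namespace TotalAltAux

open Finset Function

variable {V : Type*} [NormedAddCommGroup V] [InnerProductSpace ℝ V]

theorem altmap_sum_apply {q : ℕ} {ι : Type*} (s : Finset ι)
    (f : ι → AlternatingMap ℝ V ℝ (Fin q)) (v : Fin q → V) :
    (∑ k ∈ s, f k) v = ∑ k ∈ s, f k v := by
  induction s using Finset.cons_induction with
  | empty => simp
  | cons a s ha ih => rw [Finset.sum_cons, Finset.sum_cons, AlternatingMap.add_apply, ih]

theorem altmap_sum_apply' {p q : ℕ} {ι : Type*} (s : Finset ι)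
    (f : ι → AlternatingMap ℝ V (AlternatingMap ℝ V ℝ (Fin q)) (Fin p)) (v : Fin p → V) :
    (∑ k ∈ s, f k) v = ∑ k ∈ s, f k v := by
  induction s using Finset.cons_induction with
  | empty => simp
  | cons a s ha ih => rw [Finset.sum_cons, Finset.sum_cons, AlternatingMap.add_apply, ih]

variable (J : V →ₗ[ℝ] V) (p q : ℕ) (Q : AlternatingMap ℝ V (AlternatingMap ℝ V ℝ (Fin q)) (Fin p))

/-- The pairing `(p+q)`-multilinear function. -/
def B (z : Fin (p + q) → V) : ℝ :=
  Q (fun i => z (Fin.castAdd q i)) (fun j => z (Fin.natAdd p j))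

/-- Apply `J` at the slots given by `ε`. -/
def zJ (ε : Fin (p + q) → Bool) (z : Fin (p + q) → V) : Fin (p + q) → V :=
  fun i => if ε i then J (z i) else z i

/-- Apply `J` at one slot. -/
def uJ (k : Fin (p + q)) (z : Fin (p + q) → V) : Fin (p + q) → V :=
  Function.update z k (J (z k))

theorem natAdd_ne_castAdd (k : Fin p) (j : Fin q) : Fin.natAdd p j ≠ Fin.castAdd q k := by
  intro h
  have := congrArg Fin.val h
  simp at this; omega

theorem update_comp_cast (z : Fin (p + q) → V) (k : Fin p) (x : V) :
    (Function.update z (Fin.castAdd q k) x) ∘ (Fin.castAdd q) = Function.update (z ∘ (Fin.castAdd q)) k x :=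
  Function.update_comp_eq_of_injective z (Fin.castAdd_injective p q) k x

theorem natAdd_inj : Function.Injective (fun j : Fin q => Fin.natAdd p j) := by
  intro a b h
  have := congrArg Fin.val h
  simp only [Fin.coe_natAdd] at this
  exact Fin.ext (by omega)

theorem update_comp_nat (z : Fin (p + q) → V) (j : Fin q) (x : V) :
    (Function.update z (Fin.natAdd p j) x) ∘ (Fin.natAdd p) = Function.update (z ∘ (Fin.natAdd p)) j x :=
  Function.update_comp_eq_of_injective z (natAdd_inj p q) j x

theorem update_cast_nat (z : Fin (p + q) → V) (k : Fin p) (x : V) :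
    (Function.update z (Fin.castAdd q k) x) ∘ (Fin.natAdd p) = z ∘ (Fin.natAdd p) :=
  Function.update_comp_eq_of_forall_ne z x (fun j => natAdd_ne_castAdd p q k j)

theorem update_nat_cast (z : Fin (p + q) → V) (j : Fin q) (x : V) :
    (Function.update z (Fin.natAdd p j) x) ∘ (Fin.castAdd q) = z ∘ (Fin.castAdd q) :=
  Function.update_comp_eq_of_forall_ne z x (fun k => (natAdd_ne_castAdd p q k j).symm)

theorem B_update_cast (z : Fin (p + q) → V) (k : Fin p) (x : V) :
    B p q Q (Function.update z (Fin.castAdd q k) x)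
      = Q (Function.update (fun i => z (Fin.castAdd q i)) k x) (fun j => z (Fin.natAdd p j)) := by
  have h1 := update_comp_cast p q z k x
  have h2 := update_cast_nat p q z k x
  simp only [B]
  rw [show (fun i => Function.update z (Fin.castAdd q k) x (Fin.castAdd q i))
      = (Function.update z (Fin.castAdd q k) x) ∘ (Fin.castAdd q) from rfl,
    show (fun j => Function.update z (Fin.castAdd q k) x (Fin.natAdd p j))
      = (Function.update z (Fin.castAdd q k) x) ∘ (Fin.natAdd p) from rfl, h1, h2]
  rfl

theorem B_update_nat (z : Fin (p + q) → V) (j : Fin q) (x : V) :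
    B p q Q (Function.update z (Fin.natAdd p j) x)
      = Q (fun i => z (Fin.castAdd q i)) (Function.update (fun i => z (Fin.natAdd p i)) j x) := by
  have h1 := update_comp_nat p q z j x
  have h2 := update_nat_cast p q z j x
  simp only [B]
  rw [show (fun i => Function.update z (Fin.natAdd p j) x (Fin.castAdd q i))
      = (Function.update z (Fin.natAdd p j) x) ∘ (Fin.castAdd q) from rfl,
    show (fun i => Function.update z (Fin.natAdd p j) x (Fin.natAdd p i))
      = (Function.update z (Fin.natAdd p j) x) ∘ (Fin.natAdd p) from rfl, h1, h2]
  rfl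

theorem B_update_neg (z : Fin (p + q) → V) (k : Fin (p + q)) (x : V) :
    B p q Q (Function.update z k (-x)) = - B p q Q (Function.update z k x) := by
  induction k using Fin.addCases with
  | left k =>
      rw [B_update_cast, B_update_cast, AlternatingMap.map_update_neg, AlternatingMap.neg_apply]
  | right j =>
      rw [B_update_nat, B_update_nat, AlternatingMap.map_update_neg]

theorem B_eq (y : Fin (p + q) → V) :
    B p q Q y = Q (y ∘ (Fin.castAdd q)) (y ∘ (Fin.natAdd p)) := rfl

theorem uJ_comp_cast (y : Fin (p + q) → V) (k : Fin p) :
    (uJ J p q (Fin.castAdd q k) y) ∘ (Fin.castAdd q)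
      = Function.update (y ∘ (Fin.castAdd q)) k (J ((y ∘ (Fin.castAdd q)) k)) :=
  update_comp_cast p q y k _

theorem uJ_comp_nat_of_cast (y : Fin (p + q) → V) (k : Fin p) :
    (uJ J p q (Fin.castAdd q k) y) ∘ (Fin.natAdd p) = y ∘ (Fin.natAdd p) :=
  update_cast_nat p q y k _

theorem uJ_comp_nat (y : Fin (p + q) → V) (j : Fin q) :
    (uJ J p q (Fin.natAdd p j) y) ∘ (Fin.natAdd p)
      = Function.update (y ∘ (Fin.natAdd p)) j (J ((y ∘ (Fin.natAdd p)) j)) :=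
  update_comp_nat p q y j _

theorem uJ_comp_cast_of_nat (y : Fin (p + q) → V) (j : Fin q) :
    (uJ J p q (Fin.natAdd p j) y) ∘ (Fin.castAdd q) = y ∘ (Fin.castAdd q) :=
  update_nat_cast p q y j _

theorem harg_B (harg : ArgTypeP J p q Q) (z : Fin (p + q) → V) :
    ∑ k : Fin p, ∑ l : Fin p,
        B p q Q (uJ J p q (Fin.castAdd q l) (uJ J p q (Fin.castAdd q k) z))
      = (-((p : ℝ)) ^ 2) * B p q Q z := by
  have h := congrFun harg (z ∘ (Fin.castAdd q))
  have h2 := congrArg (fun (F : AlternatingMap ℝ V ℝ (Fin q)) => F (z ∘ (Fin.natAdd p))) h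
  simp only [calJ] at h2
  rw [altmap_sum_apply] at h2
  simp only [altmap_sum_apply] at h2
  have key : ∀ k l : Fin p,
      B p q Q (uJ J p q (Fin.castAdd q l) (uJ J p q (Fin.castAdd q k) z))
        = Q (Function.update (Function.update (z ∘ (Fin.castAdd q)) k (J ((z ∘ (Fin.castAdd q)) k))) l
            (J (Function.update (z ∘ (Fin.castAdd q)) k (J ((z ∘ (Fin.castAdd q)) k)) l)))
            (z ∘ (Fin.natAdd p)) := by
    intro k l
    rw [B_eq, uJ_comp_cast, uJ_comp_nat_of_cast, uJ_comp_cast, uJ_comp_nat_of_cast]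
  simp only [key]
  rw [h2]
  simp [Pi.smul_apply, AlternatingMap.smul_apply, smul_eq_mul, B_eq]

theorem hval_B (hval : ValTypeP J p q Q) (z : Fin (p + q) → V) :
    ∑ j : Fin q, ∑ l : Fin q,
        B p q Q (uJ J p q (Fin.natAdd p l) (uJ J p q (Fin.natAdd p j) z))
      = (-((q : ℝ)) ^ 2) * B p q Q z := by
  have h := congrFun (hval (z ∘ (Fin.castAdd q))) (z ∘ (Fin.natAdd p))
  simp only [calJ] at h
  have key : ∀ j l : Fin q,
      B p q Q (uJ J p q (Fin.natAdd p l) (uJ J p q (Fin.natAdd p j) z))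
        = Q (z ∘ (Fin.castAdd q))
            (Function.update (Function.update (z ∘ (Fin.natAdd p)) j (J ((z ∘ (Fin.natAdd p)) j))) l
            (J (Function.update (z ∘ (Fin.natAdd p)) j (J ((z ∘ (Fin.natAdd p)) j)) l))) := by
    intro j l
    rw [B_eq, uJ_comp_cast_of_nat, uJ_comp_nat, uJ_comp_cast_of_nat, uJ_comp_nat]
  simp only [key]
  rw [h]
  simp [Pi.smul_apply, smul_eq_mul, B_eq]

theorem hanti_B (hanti : AntiCommJ J p q Q) (z : Fin (p + q) → V) :
    (q : ℝ) * ∑ k : Fin p, B p q Q (uJ J p q (Fin.castAdd q k) z)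
      = (-(p : ℝ)) * ∑ j : Fin q, B p q Q (uJ J p q (Fin.natAdd p j) z) := by
  have h := congrFun (hanti (z ∘ (Fin.castAdd q))) (z ∘ (Fin.natAdd p))
  simp only [calJ, Pi.smul_apply, smul_eq_mul] at h
  rw [altmap_sum_apply] at h
  have key1 : ∀ k : Fin p,
      B p q Q (uJ J p q (Fin.castAdd q k) z)
        = Q (Function.update (z ∘ (Fin.castAdd q)) k (J ((z ∘ (Fin.castAdd q)) k))) (z ∘ (Fin.natAdd p)) := by
    intro k
    rw [B_eq, uJ_comp_cast, uJ_comp_nat_of_cast]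
  have key2 : ∀ j : Fin q,
      B p q Q (uJ J p q (Fin.natAdd p j) z)
        = Q (z ∘ (Fin.castAdd q))
            (Function.update (z ∘ (Fin.natAdd p)) j (J ((z ∘ (Fin.natAdd p)) j))) := by
    intro j
    rw [B_eq, uJ_comp_cast_of_nat, uJ_comp_nat]
  simp only [key1, key2]
  exact h

theorem hker_B (hker : totalAlt p q ⇑Q = 0) (y : Fin (p + q) → V) :
    ∑ σ : Equiv.Perm (Fin (p + q)), ((Equiv.Perm.sign σ : ℤ) : ℝ) * B p q Q (y ∘ ⇑σ) = 0 := by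
  have h := congrFun hker y
  simpa [totalAlt, B_eq, Function.comp_def] using h

/-- Per-slot weight. -/
def wgt (t e : Bool) : ℂ := if e then (if t then -Complex.I else Complex.I) else 1

/-- The slot eigenvalue. -/
def iot (t : Bool) : ℂ := if t then Complex.I else -Complex.I

/-- Total weight of a `J`-pattern `ε` relative to the type pattern `τ`. -/
def Wt (τ ε : Fin (p + q) → Bool) : ℂ := ∏ i, wgt (τ i) (ε i)

/-- The complexified corner evaluations. -/
def Cc (τ : Fin (p + q) → Bool) (z : Fin (p + q) → V) : ℂ :=
  ∑ ε : Fin (p + q) → Bool, Wt p q τ ε * ((B p q Q (zJ J p q ε z) : ℝ) : ℂ)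

theorem flip_invol (k : Fin (p + q)) :
    Function.Involutive (fun ε : Fin (p + q) → Bool => Function.update ε k (!ε k)) := by
  intro ε
  simp only [Function.update_idem, Function.update_self]
  rw [Bool.not_not, Function.update_eq_self]

/-- Flipping the pattern at slot `k`, as a permutation. -/
def flipE (k : Fin (p + q)) : Equiv.Perm (Fin (p + q) → Bool) :=
  Function.Involutive.toPerm _ (flip_invol p q k)

theorem flipE_apply (k : Fin (p + q)) (ε : Fin (p + q) → Bool) :
    flipE p q k ε = Function.update ε k (!ε k) := rfl

theorem Wt_update (τ ε : Fin (p + q) → Bool) (k : Fin (p + q)) (b : Bool) :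
    Wt p q τ (Function.update ε k b)
      = wgt (τ k) b * ∏ i ∈ Finset.univ.erase k, wgt (τ i) (ε i) := by
  have h : (fun i => wgt (τ i) (Function.update ε k b i))
      = Function.update (fun i => wgt (τ i) (ε i)) k (wgt (τ k) b) := by
    funext i
    rcases eq_or_ne i k with rfl | hik
    · simp
    · simp [Function.update_apply, hik]
  rw [Wt, h]
  rw [Finset.prod_update_of_mem (Finset.mem_univ k), Finset.sdiff_singleton_eq_erase]

theorem Wt_erase (τ ε : Fin (p + q) → Bool) (k : Fin (p + q)) :
    Wt p q τ ε = wgt (τ k) (ε k) * ∏ i ∈ Finset.univ.erase k, wgt (τ i) (ε i) :=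
  (Finset.mul_prod_erase Finset.univ _ (Finset.mem_univ k)).symm

theorem zJ_uJ_false (ε : Fin (p + q) → Bool) (k : Fin (p + q)) (z : Fin (p + q) → V)
    (h : ε k = false) :
    zJ J p q ε (uJ J p q k z) = zJ J p q (Function.update ε k true) z := by
  funext i
  rcases eq_or_ne i k with rfl | hik
  · simp [zJ, uJ, h]
  · simp [zJ, uJ, Function.update_apply, hik]

theorem zJ_uJ_true (ε : Fin (p + q) → Bool) (k : Fin (p + q)) (z : Fin (p + q) → V)
    (h : ε k = true) :
    zJ J p q ε (uJ J p q k z)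
      = Function.update (zJ J p q (Function.update ε k false) z) k (J (J (z k))) := by
  funext i
  rcases eq_or_ne i k with rfl | hik
  · simp [zJ, uJ, h]
  · simp [zJ, uJ, Function.update_apply, hik]

theorem Cc_uJ (hJ2 : ∀ v, J (J v) = -v) (τ : Fin (p + q) → Bool) (k : Fin (p + q))
    (z : Fin (p + q) → V) :
    Cc J p q Q τ (uJ J p q k z) = iot (τ k) * Cc J p q Q τ z := by
  have main : ∀ ε : Fin (p + q) → Bool,
      Wt p q τ ε * ((B p q Q (zJ J p q ε (uJ J p q k z)) : ℝ) : ℂ)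
        = iot (τ k) * (Wt p q τ (flipE p q k ε)
            * ((B p q Q (zJ J p q (flipE p q k ε) z) : ℝ) : ℂ)) := by
    intro ε
    cases hk : ε k with
    | false =>
        rw [zJ_uJ_false J p q ε k z hk, flipE_apply, hk,
          Wt_update, Wt_erase p q τ ε k, hk]
        cases htk : τ k <;> simp [wgt, iot] <;> ring_nf <;> simp [Complex.I_sq] <;> ring_nf
    | true =>
        rw [zJ_uJ_true J p q ε k z hk, flipE_apply, hk, hJ2 (z k)]
        rw [B_update_neg]
        have hz : z k = zJ J p q (Function.update ε k false) z k := by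
          simp [zJ]
        rw [hz, Function.update_eq_self]
        rw [Wt_update, Wt_erase p q τ ε k, hk]
        push_cast
        cases htk : τ k <;> simp [wgt, iot] <;> ring_nf <;> simp [Complex.I_sq] <;> ring_nf
  calc Cc J p q Q τ (uJ J p q k z)
      = ∑ ε : Fin (p + q) → Bool, iot (τ k) * (Wt p q τ (flipE p q k ε)
          * ((B p q Q (zJ J p q (flipE p q k ε) z) : ℝ) : ℂ)) := by
        exact Finset.sum_congr rfl (fun ε _ => main ε)
    _ = iot (τ k) * ∑ ε : Fin (p + q) → Bool, Wt p q τ (flipE p q k ε)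
          * ((B p q Q (zJ J p q (flipE p q k ε) z) : ℝ) : ℂ) := by
        rw [Finset.mul_sum]
    _ = iot (τ k) * Cc J p q Q τ z := by
        rw [Equiv.sum_comp (flipE p q k)
          (fun ε => Wt p q τ ε * ((B p q Q (zJ J p q ε z) : ℝ) : ℂ))]
        rfl

theorem zJ_uJ_comm (ε : Fin (p + q) → Bool) (k : Fin (p + q)) (z : Fin (p + q) → V) :
    zJ J p q ε (uJ J p q k z) = uJ J p q k (zJ J p q ε z) := by
  funext i
  rcases eq_or_ne i k with rfl | hik
  · simp only [zJ, uJ, Function.update_self]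
    cases h : ε i <;> simp [h]
  · simp [zJ, uJ, Function.update_apply, hik]

theorem Cc_sum_eq {ι : Type*} [Fintype ι] (F : ι → (Fin (p + q) → V) → (Fin (p + q) → V))
    (hcomm : ∀ i ε z, zJ J p q ε (F i z) = F i (zJ J p q ε z))
    (τ : Fin (p + q) → Bool) (z : Fin (p + q) → V) :
    ∑ i, Cc J p q Q τ (F i z)
      = ∑ ε : Fin (p + q) → Bool,
          Wt p q τ ε * ((∑ i, B p q Q (F i (zJ J p q ε z)) : ℝ) : ℂ) := by
  simp only [Cc]
  rw [Finset.sum_comm]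
  refine Finset.sum_congr rfl (fun ε _ => ?_)
  push_cast
  rw [Finset.mul_sum]
  refine Finset.sum_congr rfl (fun i _ => ?_)
  rw [hcomm]

theorem Cc_eigen_arg (harg : ArgTypeP J p q Q) (hJ2 : ∀ v, J (J v) = -v)
    (τ : Fin (p + q) → Bool) (z : Fin (p + q) → V) :
    ((∑ k : Fin p, iot (τ (Fin.castAdd q k))) ^ 2 + ((p : ℂ)) ^ 2) * Cc J p q Q τ z = 0 := by
  set S := ∑ k : Fin p, iot (τ (Fin.castAdd q k)) with hS
  have h1 : ∑ kl : Fin p × Fin p,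
      Cc J p q Q τ (uJ J p q (Fin.castAdd q kl.2) (uJ J p q (Fin.castAdd q kl.1) z))
      = S ^ 2 * Cc J p q Q τ z := by
    rw [Fintype.sum_prod_type]
    calc ∑ k : Fin p, ∑ l : Fin p,
          Cc J p q Q τ (uJ J p q (Fin.castAdd q l) (uJ J p q (Fin.castAdd q k) z))
        = ∑ k : Fin p, S * (iot (τ (Fin.castAdd q k)) * Cc J p q Q τ z) := by
          refine Finset.sum_congr rfl (fun k _ => ?_)
          rw [← Cc_uJ J p q Q hJ2 τ (Fin.castAdd q k) z, hS, Finset.sum_mul]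
          exact Finset.sum_congr rfl (fun l _ => Cc_uJ J p q Q hJ2 τ _ _)
      _ = S * ((∑ k : Fin p, iot (τ (Fin.castAdd q k))) * Cc J p q Q τ z) := by
          rw [← Finset.mul_sum, ← Finset.sum_mul]
      _ = S ^ 2 * Cc J p q Q τ z := by
          rw [← hS]; ring
  have h2 : ∑ kl : Fin p × Fin p,
      Cc J p q Q τ (uJ J p q (Fin.castAdd q kl.2) (uJ J p q (Fin.castAdd q kl.1) z))
      = (-((p : ℂ)) ^ 2) * Cc J p q Q τ z := by
    rw [Cc_sum_eq J p q Q
      (fun (kl : Fin p × Fin p) (y : Fin (p + q) → V) =>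
        uJ J p q (Fin.castAdd q kl.2) (uJ J p q (Fin.castAdd q kl.1) y))
      (fun kl ε y => by rw [zJ_uJ_comm, zJ_uJ_comm]) τ z]
    have key : ∀ ε : Fin (p + q) → Bool,
        ∑ kl : Fin p × Fin p,
          B p q Q (uJ J p q (Fin.castAdd q kl.2) (uJ J p q (Fin.castAdd q kl.1) (zJ J p q ε z)))
        = (-((p : ℝ)) ^ 2) * B p q Q (zJ J p q ε z) := by
      intro ε
      rw [Fintype.sum_prod_type]
      exact harg_B J p q Q harg (zJ J p q ε z)
    calc ∑ ε : Fin (p + q) → Bool, Wt p q τ ε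
          * ((∑ kl : Fin p × Fin p, B p q Q (uJ J p q (Fin.castAdd q kl.2)
              (uJ J p q (Fin.castAdd q kl.1) (zJ J p q ε z))) : ℝ) : ℂ)
        = ∑ ε : Fin (p + q) → Bool, (-((p : ℂ)) ^ 2)
            * (Wt p q τ ε * ((B p q Q (zJ J p q ε z) : ℝ) : ℂ)) := by
          refine Finset.sum_congr rfl (fun ε _ => ?_)
          rw [key ε]
          push_cast
          ring
      _ = (-((p : ℂ)) ^ 2) * Cc J p q Q τ z := by
          rw [← Finset.mul_sum, Cc]
  linear_combination h2 - h1

theorem Cc_eigen_val (hval : ValTypeP J p q Q) (hJ2 : ∀ v, J (J v) = -v)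
    (τ : Fin (p + q) → Bool) (z : Fin (p + q) → V) :
    ((∑ j : Fin q, iot (τ (Fin.natAdd p j))) ^ 2 + ((q : ℂ)) ^ 2) * Cc J p q Q τ z = 0 := by
  set S := ∑ j : Fin q, iot (τ (Fin.natAdd p j)) with hS
  have h1 : ∑ kl : Fin q × Fin q,
      Cc J p q Q τ (uJ J p q (Fin.natAdd p kl.2) (uJ J p q (Fin.natAdd p kl.1) z))
      = S ^ 2 * Cc J p q Q τ z := by
    rw [Fintype.sum_prod_type]
    calc ∑ k : Fin q, ∑ l : Fin q,
          Cc J p q Q τ (uJ J p q (Fin.natAdd p l) (uJ J p q (Fin.natAdd p k) z))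
        = ∑ k : Fin q, S * (iot (τ (Fin.natAdd p k)) * Cc J p q Q τ z) := by
          refine Finset.sum_congr rfl (fun k _ => ?_)
          rw [← Cc_uJ J p q Q hJ2 τ (Fin.natAdd p k) z, hS, Finset.sum_mul]
          exact Finset.sum_congr rfl (fun l _ => Cc_uJ J p q Q hJ2 τ _ _)
      _ = S * ((∑ j : Fin q, iot (τ (Fin.natAdd p j))) * Cc J p q Q τ z) := by
          rw [← Finset.mul_sum, ← Finset.sum_mul]
      _ = S ^ 2 * Cc J p q Q τ z := by
          rw [← hS]; ring
  have h2 : ∑ kl : Fin q × Fin q,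
      Cc J p q Q τ (uJ J p q (Fin.natAdd p kl.2) (uJ J p q (Fin.natAdd p kl.1) z))
      = (-((q : ℂ)) ^ 2) * Cc J p q Q τ z := by
    rw [Cc_sum_eq J p q Q
      (fun (kl : Fin q × Fin q) (y : Fin (p + q) → V) =>
        uJ J p q (Fin.natAdd p kl.2) (uJ J p q (Fin.natAdd p kl.1) y))
      (fun kl ε y => by rw [zJ_uJ_comm, zJ_uJ_comm]) τ z]
    have key : ∀ ε : Fin (p + q) → Bool,
        ∑ kl : Fin q × Fin q,
          B p q Q (uJ J p q (Fin.natAdd p kl.2) (uJ J p q (Fin.natAdd p kl.1) (zJ J p q ε z)))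
        = (-((q : ℝ)) ^ 2) * B p q Q (zJ J p q ε z) := by
      intro ε
      rw [Fintype.sum_prod_type]
      exact hval_B J p q Q hval (zJ J p q ε z)
    calc ∑ ε : Fin (p + q) → Bool, Wt p q τ ε
          * ((∑ kl : Fin q × Fin q, B p q Q (uJ J p q (Fin.natAdd p kl.2)
              (uJ J p q (Fin.natAdd p kl.1) (zJ J p q ε z))) : ℝ) : ℂ)
        = ∑ ε : Fin (p + q) → Bool, (-((q : ℂ)) ^ 2)
            * (Wt p q τ ε * ((B p q Q (zJ J p q ε z) : ℝ) : ℂ)) := by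
          refine Finset.sum_congr rfl (fun ε _ => ?_)
          rw [key ε]
          push_cast
          ring
      _ = (-((q : ℂ)) ^ 2) * Cc J p q Q τ z := by
          rw [← Finset.mul_sum, Cc]
  linear_combination h2 - h1

theorem Cc_anti (hanti : AntiCommJ J p q Q) (hJ2 : ∀ v, J (J v) = -v)
    (τ : Fin (p + q) → Bool) (z : Fin (p + q) → V) :
    ((q : ℂ) * (∑ k : Fin p, iot (τ (Fin.castAdd q k)))
      + (p : ℂ) * (∑ j : Fin q, iot (τ (Fin.natAdd p j)))) * Cc J p q Q τ z = 0 := by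
  have hA : ∑ k : Fin p, Cc J p q Q τ (uJ J p q (Fin.castAdd q k) z)
      = (∑ k : Fin p, iot (τ (Fin.castAdd q k))) * Cc J p q Q τ z := by
    rw [Finset.sum_mul]
    exact Finset.sum_congr rfl (fun k _ => Cc_uJ J p q Q hJ2 τ _ _)
  have hV : ∑ j : Fin q, Cc J p q Q τ (uJ J p q (Fin.natAdd p j) z)
      = (∑ j : Fin q, iot (τ (Fin.natAdd p j))) * Cc J p q Q τ z := by
    rw [Finset.sum_mul]
    exact Finset.sum_congr rfl (fun j _ => Cc_uJ J p q Q hJ2 τ _ _)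
  have hA2 : ∑ k : Fin p, Cc J p q Q τ (uJ J p q (Fin.castAdd q k) z)
      = ∑ ε : Fin (p + q) → Bool, Wt p q τ ε
          * ((∑ k : Fin p, B p q Q (uJ J p q (Fin.castAdd q k) (zJ J p q ε z)) : ℝ) : ℂ) :=
    Cc_sum_eq J p q Q (fun (k : Fin p) (y : Fin (p + q) → V) => uJ J p q (Fin.castAdd q k) y)
      (fun k ε y => by rw [zJ_uJ_comm]) τ z
  have hV2 : ∑ j : Fin q, Cc J p q Q τ (uJ J p q (Fin.natAdd p j) z)
      = ∑ ε : Fin (p + q) → Bool, Wt p q τ ε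
          * ((∑ j : Fin q, B p q Q (uJ J p q (Fin.natAdd p j) (zJ J p q ε z)) : ℝ) : ℂ) :=
    Cc_sum_eq J p q Q (fun (j : Fin q) (y : Fin (p + q) → V) => uJ J p q (Fin.natAdd p j) y)
      (fun j ε y => by rw [zJ_uJ_comm]) τ z
  have main : (q : ℂ) * ∑ k : Fin p, Cc J p q Q τ (uJ J p q (Fin.castAdd q k) z)
      = (-(p : ℂ)) * ∑ j : Fin q, Cc J p q Q τ (uJ J p q (Fin.natAdd p j) z) := by
    rw [hA2, hV2, Finset.mul_sum, Finset.mul_sum]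
    refine Finset.sum_congr rfl (fun ε _ => ?_)
    have hb := hanti_B J p q Q hanti (zJ J p q ε z)
    have hb' : ((q : ℂ)) * ((∑ k : Fin p, B p q Q (uJ J p q (Fin.castAdd q k) (zJ J p q ε z)) : ℝ) : ℂ)
        = (-(p : ℂ)) * ((∑ j : Fin q, B p q Q (uJ J p q (Fin.natAdd p j) (zJ J p q ε z)) : ℝ) : ℂ) := by
      exact_mod_cast congrArg (fun r : ℝ => (r : ℂ)) hb
    calc (q : ℂ) * (Wt p q τ ε * ((∑ k : Fin p, B p q Q (uJ J p q (Fin.castAdd q k) (zJ J p q ε z)) : ℝ) : ℂ))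
        = Wt p q τ ε * ((q : ℂ) * ((∑ k : Fin p, B p q Q (uJ J p q (Fin.castAdd q k) (zJ J p q ε z)) : ℝ) : ℂ)) := by ring
      _ = Wt p q τ ε * ((-(p : ℂ)) * ((∑ j : Fin q, B p q Q (uJ J p q (Fin.natAdd p j) (zJ J p q ε z)) : ℝ) : ℂ)) := by rw [hb']
      _ = (-(p : ℂ)) * (Wt p q τ ε * ((∑ j : Fin q, B p q Q (uJ J p q (Fin.natAdd p j) (zJ J p q ε z)) : ℝ) : ℂ)) := by ring
  rw [hA, hV] at main
  linear_combination main

/-- The distinguished "holomorphic arguments / antiholomorphic values" pattern. -/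
def tst : Fin (p + q) → Bool := fun i => decide ((i : ℕ) < p)

theorem tst_cast (k : Fin p) : tst p q (Fin.castAdd q k) = true := by
  simp [tst]

theorem tst_nat (j : Fin q) : tst p q (Fin.natAdd p j) = false := by
  simp [tst]

def saA (τ : Fin (p + q) → Bool) : ℤ := ∑ k : Fin p, (if τ (Fin.castAdd q k) then (1 : ℤ) else -1)

def saV (τ : Fin (p + q) → Bool) : ℤ := ∑ j : Fin q, (if τ (Fin.natAdd p j) then (1 : ℤ) else -1)

theorem S_eq_arg (τ : Fin (p + q) → Bool) :
    ∑ k : Fin p, iot (τ (Fin.castAdd q k)) = Complex.I * ((saA p q τ : ℤ) : ℂ) := by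
  rw [saA]
  push_cast
  rw [Finset.mul_sum]
  refine Finset.sum_congr rfl (fun k _ => ?_)
  cases h : τ (Fin.castAdd q k) <;> simp [iot, h]

theorem S_eq_val (τ : Fin (p + q) → Bool) :
    ∑ j : Fin q, iot (τ (Fin.natAdd p j)) = Complex.I * ((saV p q τ : ℤ) : ℂ) := by
  rw [saV]
  push_cast
  rw [Finset.mul_sum]
  refine Finset.sum_congr rfl (fun j _ => ?_)
  cases h : τ (Fin.natAdd p j) <;> simp [iot, h]

theorem sum_pm_all {r : ℕ} (b : Fin r → Bool)
    (h : ∑ k : Fin r, (if b k then (1 : ℤ) else -1) = r) : ∀ k, b k = true := by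
  by_contra hcon
  push_neg at hcon
  obtain ⟨k0, hk0⟩ := hcon
  have hb : b k0 = false := by
    cases hbk : b k0
    · rfl
    · exact absurd hbk hk0
  have hsplit := Finset.add_sum_erase Finset.univ (fun k => if b k then (1 : ℤ) else -1)
    (Finset.mem_univ k0)
  have hle : ∑ k ∈ Finset.univ.erase k0, (if b k then (1 : ℤ) else -1)
      ≤ ((Finset.univ.erase k0).card : ℤ) := by
    calc ∑ k ∈ Finset.univ.erase k0, (if b k then (1 : ℤ) else -1)
        ≤ ∑ _k ∈ Finset.univ.erase k0, (1 : ℤ) :=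
          Finset.sum_le_sum (fun k _ => by split <;> omega)
      _ = ((Finset.univ.erase k0).card : ℤ) := by simp
  have hcard : (Finset.univ.erase k0).card = r - 1 := by
    rw [Finset.card_erase_of_mem (Finset.mem_univ k0)]
    simp
  have hr : 1 ≤ r := by
    have := k0.isLt
    omega
  have hsum : (if b k0 then (1 : ℤ) else -1)
      + ∑ k ∈ Finset.univ.erase k0, (if b k then (1 : ℤ) else -1)
      = ∑ k : Fin r, (if b k then (1 : ℤ) else -1) := hsplit
  rw [hb] at hsum
  simp only [Bool.false_eq_true, if_false] at hsum
  rw [h] at hsum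
  rw [hcard] at hle
  omega

theorem sum_pm_none {r : ℕ} (b : Fin r → Bool)
    (h : ∑ k : Fin r, (if b k then (1 : ℤ) else -1) = -(r : ℤ)) : ∀ k, b k = false := by
  have h' : ∑ k : Fin r, (if !(b k) then (1 : ℤ) else -1) = r := by
    have e : ∀ k : Fin r, (if !(b k) then (1 : ℤ) else -1) = -(if b k then (1 : ℤ) else -1) := by
      intro k
      cases hb : b k <;> simp [hb]
    rw [Finset.sum_congr rfl (fun k _ => e k)]
    rw [Finset.sum_neg_distrib, h]
    ring
  intro k
  have := sum_pm_all (fun k => !(b k)) h' k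
  cases hb : b k
  · rfl
  · rw [hb] at this; simp at this

theorem saA_dichotomy (harg : ArgTypeP J p q Q) (hJ2 : ∀ v, J (J v) = -v)
    (τ : Fin (p + q) → Bool) (z : Fin (p + q) → V) (hC : Cc J p q Q τ z ≠ 0) :
    saA p q τ = p ∨ saA p q τ = -(p : ℤ) := by
  have heig := Cc_eigen_arg J p q Q harg hJ2 τ z
  have hfac : (∑ k : Fin p, iot (τ (Fin.castAdd q k))) ^ 2 + ((p : ℂ)) ^ 2 = 0 := by
    rcases mul_eq_zero.mp heig with h | h
    · exact h
    · exact absurd h hC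
  rw [S_eq_arg] at hfac
  have hx : ((saA p q τ : ℤ) : ℂ) ^ 2 = ((p : ℂ)) ^ 2 := by
    linear_combination -hfac + ((saA p q τ : ℤ) : ℂ) ^ 2 * Complex.I_sq
  have hx2 : (saA p q τ) ^ 2 = ((p : ℤ)) ^ 2 := by exact_mod_cast hx
  have hz : (saA p q τ - p) * (saA p q τ + p) = 0 := by linear_combination hx2
  rcases mul_eq_zero.mp hz with h | h
  · left; omega
  · right; omega

theorem saV_dichotomy (hval : ValTypeP J p q Q) (hJ2 : ∀ v, J (J v) = -v)
    (τ : Fin (p + q) → Bool) (z : Fin (p + q) → V) (hC : Cc J p q Q τ z ≠ 0) :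
    saV p q τ = q ∨ saV p q τ = -(q : ℤ) := by
  have heig := Cc_eigen_val J p q Q hval hJ2 τ z
  have hfac : (∑ j : Fin q, iot (τ (Fin.natAdd p j))) ^ 2 + ((q : ℂ)) ^ 2 = 0 := by
    rcases mul_eq_zero.mp heig with h | h
    · exact h
    · exact absurd h hC
  rw [S_eq_val] at hfac
  have hx : ((saV p q τ : ℤ) : ℂ) ^ 2 = ((q : ℂ)) ^ 2 := by
    linear_combination -hfac + ((saV p q τ : ℤ) : ℂ) ^ 2 * Complex.I_sq
  have hx2 : (saV p q τ) ^ 2 = ((q : ℤ)) ^ 2 := by exact_mod_cast hx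
  have hz : (saV p q τ - q) * (saV p q τ + q) = 0 := by linear_combination hx2
  rcases mul_eq_zero.mp hz with h | h
  · left; omega
  · right; omega

theorem anti_eq (hanti : AntiCommJ J p q Q) (hJ2 : ∀ v, J (J v) = -v)
    (τ : Fin (p + q) → Bool) (z : Fin (p + q) → V) (hC : Cc J p q Q τ z ≠ 0) :
    (q : ℤ) * saA p q τ + (p : ℤ) * saV p q τ = 0 := by
  have h := Cc_anti J p q Q hanti hJ2 τ z
  have hfac : (q : ℂ) * (∑ k : Fin p, iot (τ (Fin.castAdd q k)))
      + (p : ℂ) * (∑ j : Fin q, iot (τ (Fin.natAdd p j))) = 0 := by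
    rcases mul_eq_zero.mp h with h' | h'
    · exact h'
    · exact absurd h' hC
  rw [S_eq_arg, S_eq_val] at hfac
  have hI : Complex.I * ((q : ℂ) * ((saA p q τ : ℤ) : ℂ) + (p : ℂ) * ((saV p q τ : ℤ) : ℂ)) = 0 := by
    linear_combination hfac
  rcases mul_eq_zero.mp hI with h' | h'
  · exact absurd h' Complex.I_ne_zero
  · exact_mod_cast h'

theorem tau_corner (harg : ArgTypeP J p q Q) (hval : ValTypeP J p q Q)
    (hanti : AntiCommJ J p q Q) (hJ2 : ∀ v, J (J v) = -v)
    (τ : Fin (p + q) → Bool) (z : Fin (p + q) → V) (hC : Cc J p q Q τ z ≠ 0) :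
    τ = tst p q ∨ τ = fun i => !(tst p q i) := by
  have hA := saA_dichotomy J p q Q harg hJ2 τ z hC
  have hV := saV_dichotomy J p q Q hval hJ2 τ z hC
  have hQ := anti_eq J p q Q hanti hJ2 τ z hC
  rcases hA with hA | hA <;> rcases hV with hV | hV
  · -- all args true, all vals true : pq = 0
    rw [hA, hV] at hQ
    have hpq0 : (p : ℤ) * (q : ℤ) = 0 := by linarith
    have : p = 0 ∨ q = 0 := by
      rcases mul_eq_zero.mp hpq0 with h | h
      · left; exact_mod_cast h
      · right; exact_mod_cast h
    rcases this with hp | hq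
    · right
      funext i
      induction i using Fin.addCases with
      | left k => exact absurd k.isLt (by omega)
      | right j =>
          rw [sum_pm_all (fun j => τ (Fin.natAdd p j)) hV j, tst_nat]; rfl
    · left
      funext i
      induction i using Fin.addCases with
      | left k => rw [sum_pm_all (fun k => τ (Fin.castAdd q k)) hA k, tst_cast]
      | right j => exact absurd j.isLt (by omega)
  · -- all args true, all vals false
    left
    funext i
    induction i using Fin.addCases with
    | left k => rw [sum_pm_all (fun k => τ (Fin.castAdd q k)) hA k, tst_cast]
    | right j => rw [sum_pm_none (fun j => τ (Fin.natAdd p j)) hV j, tst_nat]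
  · -- all args false, all vals true
    right
    funext i
    induction i using Fin.addCases with
    | left k => rw [sum_pm_none (fun k => τ (Fin.castAdd q k)) hA k, tst_cast]; rfl
    | right j => rw [sum_pm_all (fun j => τ (Fin.natAdd p j)) hV j, tst_nat]; rfl
  · -- all args false, all vals false : pq = 0
    rw [hA, hV] at hQ
    have hpq0 : (p : ℤ) * (q : ℤ) = 0 := by linarith
    have : p = 0 ∨ q = 0 := by
      rcases mul_eq_zero.mp hpq0 with h | h
      · left; exact_mod_cast h
      · right; exact_mod_cast h
    rcases this with hp | hq
    · left
      funext i
      induction i using Fin.addCases with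
      | left k => exact absurd k.isLt (by omega)
      | right j =>
          rw [sum_pm_none (fun j => τ (Fin.natAdd p j)) hV j, tst_nat]
    · right
      funext i
      induction i using Fin.addCases with
      | left k => rw [sum_pm_none (fun k => τ (Fin.castAdd q k)) hA k, tst_cast]; rfl
      | right j => exact absurd j.isLt (by omega)

theorem Cc_perm (σ : Equiv.Perm (Fin (p + q))) (τ : Fin (p + q) → Bool) (z : Fin (p + q) → V) :
    Cc J p q Q (fun i => τ (σ i)) (fun i => z (σ i))
      = ∑ δ : Fin (p + q) → Bool,
          Wt p q τ δ * ((B p q Q (fun i => zJ J p q δ z (σ i)) : ℝ) : ℂ) := by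
  rw [Cc, ← Equiv.sum_comp (Equiv.arrowCongr σ.symm (Equiv.refl Bool))
    (fun ε => Wt p q (fun i => τ (σ i)) ε
      * ((B p q Q (zJ J p q ε (fun i => z (σ i))) : ℝ) : ℂ))]
  refine Finset.sum_congr rfl (fun δ _ => ?_)
  have he : (Equiv.arrowCongr σ.symm (Equiv.refl Bool)) δ = fun i => δ (σ i) := by
    funext i
    simp [Equiv.arrowCongr]
  rw [he]
  have hW : Wt p q (fun i => τ (σ i)) (fun i => δ (σ i)) = Wt p q τ δ := by
    rw [Wt, Wt]
    exact Equiv.prod_comp σ (fun i => wgt (τ i) (δ i))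
  have hz : zJ J p q (fun i => δ (σ i)) (fun i => z (σ i)) = fun i => zJ J p q δ z (σ i) := rfl
  rw [hW, hz]

theorem Cc_ker (hker : totalAlt p q ⇑Q = 0) (τ : Fin (p + q) → Bool) (z : Fin (p + q) → V) :
    ∑ σ : Equiv.Perm (Fin (p + q)),
      ((Equiv.Perm.sign σ : ℤ) : ℂ) * Cc J p q Q (fun i => τ (σ i)) (fun i => z (σ i)) = 0 := by
  have step : ∀ σ : Equiv.Perm (Fin (p + q)),
      ((Equiv.Perm.sign σ : ℤ) : ℂ) * Cc J p q Q (fun i => τ (σ i)) (fun i => z (σ i))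
        = ∑ δ : Fin (p + q) → Bool, Wt p q τ δ
            * (((Equiv.Perm.sign σ : ℤ) : ℂ) * ((B p q Q (fun i => zJ J p q δ z (σ i)) : ℝ) : ℂ)) := by
    intro σ
    rw [Cc_perm J p q Q σ τ z, Finset.mul_sum]
    exact Finset.sum_congr rfl (fun δ _ => by ring)
  rw [Finset.sum_congr rfl (fun σ _ => step σ), Finset.sum_comm]
  rw [← Finset.sum_const_zero (s := (Finset.univ : Finset (Fin (p + q) → Bool)))]
  refine Finset.sum_congr rfl (fun δ _ => ?_)
  rw [← Finset.mul_sum]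
  have hz : ∑ σ : Equiv.Perm (Fin (p + q)),
      ((Equiv.Perm.sign σ : ℤ) : ℂ) * ((B p q Q (fun i => zJ J p q δ z (σ i)) : ℝ) : ℂ) = 0 := by
    have hr := hker_B p q Q hker (zJ J p q δ z)
    have : ((∑ σ : Equiv.Perm (Fin (p + q)),
        ((Equiv.Perm.sign σ : ℤ) : ℝ) * B p q Q ((zJ J p q δ z) ∘ ⇑σ) : ℝ) : ℂ) = 0 := by
      rw [hr]; norm_num
    rw [← this]
    push_cast
    rfl
  rw [hz, mul_zero]

/-- Block-preserving permutations. -/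
def Blk (σ : Equiv.Perm (Fin (p + q))) : Prop :=
  ∀ i : Fin (p + q), ((σ i : ℕ) < p ↔ (i : ℕ) < p)

theorem B_blk (σ : Equiv.Perm (Fin (p + q))) (hσ : Blk p q σ) (y : Fin (p + q) → V) :
    B p q Q (fun i => y (σ i)) = ((Equiv.Perm.sign σ : ℤ) : ℝ) * B p q Q y := by
  classical
  have h1 : ∀ k : Fin p, ((σ (Fin.castAdd q k) : ℕ) < p) := by
    intro k
    exact (hσ (Fin.castAdd q k)).mpr (by simpa using k.isLt)
  have h2 : ∀ j : Fin q, p ≤ ((σ (Fin.natAdd p j) : ℕ)) := by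
    intro j
    have := (hσ (Fin.natAdd p j))
    simp only [Fin.coe_natAdd] at this
    by_contra hcon
    push_neg at hcon
    have := this.mp hcon
    omega
  have hinj1 : Function.Injective (fun k : Fin p => (⟨(σ (Fin.castAdd q k) : ℕ), h1 k⟩ : Fin p)) := by
    intro a b hab
    have hv : (σ (Fin.castAdd q a) : ℕ) = (σ (Fin.castAdd q b) : ℕ) := by
      simpa using congrArg Fin.val hab
    have : σ (Fin.castAdd q a) = σ (Fin.castAdd q b) := Fin.ext hv
    exact Fin.castAdd_injective p q (σ.injective this)
  have hinj2 : Function.Injective (fun j : Fin q =>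
      (⟨(σ (Fin.natAdd p j) : ℕ) - p, by have := (σ (Fin.natAdd p j)).isLt; have := h2 j; omega⟩ : Fin q)) := by
    intro a b hab
    have hv : (σ (Fin.natAdd p a) : ℕ) - p = (σ (Fin.natAdd p b) : ℕ) - p := by
      simpa using congrArg Fin.val hab
    have : (σ (Fin.natAdd p a) : ℕ) = (σ (Fin.natAdd p b) : ℕ) := by
      have := h2 a; have := h2 b; omega
    exact natAdd_inj p q (σ.injective (Fin.ext this))
  let σ₁ : Equiv.Perm (Fin p) := Equiv.ofBijective _ (Finite.injective_iff_bijective.mp hinj1)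
  let σ₂ : Equiv.Perm (Fin q) := Equiv.ofBijective _ (Finite.injective_iff_bijective.mp hinj2)
  have hσ1 : ∀ k : Fin p, σ (Fin.castAdd q k) = Fin.castAdd q (σ₁ k) := by
    intro k
    refine Fin.ext ?_
    simp [σ₁, Equiv.ofBijective]
  have hσ2 : ∀ j : Fin q, σ (Fin.natAdd p j) = Fin.natAdd p (σ₂ j) := by
    intro j
    refine Fin.ext ?_
    simp only [σ₂, Equiv.ofBijective, Equiv.coe_fn_mk, Fin.coe_natAdd]
    have := h2 j
    omega
  have hperm : σ = Equiv.permCongr finSumFinEquiv (σ₁.sumCongr σ₂) := by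
    refine Equiv.ext (fun i => ?_)
    induction i using Fin.addCases with
    | left k =>
        rw [hσ1 k]
        simp [Equiv.permCongr_apply]
    | right j =>
        rw [hσ2 j]
        simp [Equiv.permCongr_apply]
  have hsign : Equiv.Perm.sign σ = Equiv.Perm.sign σ₁ * Equiv.Perm.sign σ₂ := by
    rw [hperm, Equiv.Perm.sign_permCongr, Equiv.Perm.sign_sumCongr]
  have hc1 : (fun k : Fin p => (fun i => y (σ i)) (Fin.castAdd q k))
      = (fun k : Fin p => y (Fin.castAdd q k)) ∘ ⇑σ₁ := by
    funext k
    simp [hσ1 k]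
  have hc2 : (fun j : Fin q => (fun i => y (σ i)) (Fin.natAdd p j))
      = (fun j : Fin q => y (Fin.natAdd p j)) ∘ ⇑σ₂ := by
    funext j
    simp [hσ2 j]
  rw [B, hc1, hc2, AlternatingMap.map_perm, AlternatingMap.map_perm, AlternatingMap.smul_apply,
    hsign]
  simp only [Units.smul_def, zsmul_eq_mul]
  push_cast
  rw [B]
  ring

theorem tst_comp_blk (σ : Equiv.Perm (Fin (p + q))) (hσ : Blk p q σ) :
    (fun i => tst p q (σ i)) = tst p q := by
  funext i
  simp only [tst]
  exact decide_eq_decide.mpr (hσ i)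

theorem Cc_blk (σ : Equiv.Perm (Fin (p + q))) (hσ : Blk p q σ) (z : Fin (p + q) → V) :
    Cc J p q Q (tst p q) (fun i => z (σ i))
      = ((Equiv.Perm.sign σ : ℤ) : ℂ) * Cc J p q Q (tst p q) z := by
  have h := Cc_perm J p q Q σ (tst p q) z
  rw [tst_comp_blk p q σ hσ] at h
  rw [h, Cc, Finset.mul_sum]
  refine Finset.sum_congr rfl (fun δ _ => ?_)
  rw [B_blk p q Q σ hσ (zJ J p q δ z)]
  push_cast
  ring

theorem Cc_tst_zero (hpq : p ≠ q) (harg : ArgTypeP J p q Q) (hval : ValTypeP J p q Q)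
    (hanti : AntiCommJ J p q Q) (hJ2 : ∀ v, J (J v) = -v)
    (hker : totalAlt p q ⇑Q = 0) (z : Fin (p + q) → V) :
    Cc J p q Q (tst p q) z = 0 := by
  classical
  have h0 := Cc_ker J p q Q hker (tst p q) z
  have hsummand : ∀ σ : Equiv.Perm (Fin (p + q)),
      ((Equiv.Perm.sign σ : ℤ) : ℂ) * Cc J p q Q (fun i => tst p q (σ i)) (fun i => z (σ i))
        = if Blk p q σ then Cc J p q Q (tst p q) z else 0 := by
    intro σ
    by_cases hb : Blk p q σ
    · rw [if_pos hb, tst_comp_blk p q σ hb, Cc_blk J p q Q σ hb z]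
      have hs : (Equiv.Perm.sign σ : ℤ) * (Equiv.Perm.sign σ : ℤ) = 1 := by
        rcases Int.units_eq_one_or (Equiv.Perm.sign σ) with h | h <;> rw [h] <;> rfl
      rw [← mul_assoc, ← Int.cast_mul, hs, Int.cast_one, one_mul]
    · rw [if_neg hb]
      by_cases hz0 : Cc J p q Q (fun i => tst p q (σ i)) (fun i => z (σ i)) = 0
      · rw [hz0, mul_zero]
      · exfalso
        rcases tau_corner J p q Q harg hval hanti hJ2 _ _ hz0 with hcor | hcor
        · apply hb
          intro i
          have hi := congrFun hcor i
          simp only [tst] at hi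
          exact decide_eq_decide.mp hi
        · apply hpq
          have hiff : ∀ i : Fin (p + q), ¬((i : ℕ) < p) ↔ ((σ i : ℕ) < p) := by
            intro i
            have hi := congrFun hcor i
            simp only [tst] at hi
            by_cases h : (i : ℕ) < p <;> by_cases h' : ((σ i : ℕ) < p) <;>
              simp [h, h'] at hi ⊢
          let eP : Fin p ≃ {i : Fin (p + q) // (i : ℕ) < p} :=
            { toFun := fun k => ⟨Fin.castAdd q k, by simpa using k.isLt⟩
              invFun := fun x => ⟨(x.1 : ℕ), x.2⟩
              left_inv := fun k => by apply Fin.ext; simp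
              right_inv := fun x => by apply Subtype.ext; apply Fin.ext; simp }
          let eQ : Fin q ≃ {i : Fin (p + q) // ¬((i : ℕ) < p)} :=
            { toFun := fun j => ⟨Fin.natAdd p j, by simp⟩
              invFun := fun x => ⟨(x.1 : ℕ) - p, by
                have h1 := x.1.isLt
                have h2 := x.2
                omega⟩
              left_inv := fun j => by apply Fin.ext; simp
              right_inv := fun x => by
                apply Subtype.ext; apply Fin.ext
                simp only [Fin.coe_natAdd]
                have h2 := x.2
                omega }
          have e := Equiv.subtypeEquiv (p := fun i : Fin (p + q) => ¬((i : ℕ) < p))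
            (q := fun i : Fin (p + q) => (i : ℕ) < p) σ hiff
          have hq : q = Fintype.card {i : Fin (p + q) // ¬((i : ℕ) < p)} := by
            rw [← Fintype.card_congr eQ, Fintype.card_fin]
          have hp : p = Fintype.card {i : Fin (p + q) // (i : ℕ) < p} := by
            rw [← Fintype.card_congr eP, Fintype.card_fin]
          have hcards : Fintype.card {i : Fin (p + q) // ¬((i : ℕ) < p)}
              = Fintype.card {i : Fin (p + q) // (i : ℕ) < p} := Fintype.card_congr e
          exact hp.trans (hcards.symm.trans hq.symm)
  rw [Finset.sum_congr rfl (fun σ _ => hsummand σ), Finset.sum_ite, Finset.sum_const_zero,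
    add_zero, Finset.sum_const] at h0
  have hmem : (1 : Equiv.Perm (Fin (p + q)))
      ∈ Finset.univ.filter (fun σ => Blk p q σ) := by
    simp only [Finset.mem_filter, Finset.mem_univ, true_and]
    intro i
    rfl
  have hcard : (Finset.univ.filter (fun σ : Equiv.Perm (Fin (p + q)) => Blk p q σ)).card ≠ 0 :=
    Finset.card_ne_zero_of_mem hmem
  rw [nsmul_eq_mul] at h0
  rcases mul_eq_zero.mp h0 with h | h
  · exact absurd (by exact_mod_cast h) hcard
  · exact h

theorem Cc_conj (τ : Fin (p + q) → Bool) (z : Fin (p + q) → V) :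
    Cc J p q Q (fun i => !(τ i)) z = (starRingEnd ℂ) (Cc J p q Q τ z) := by
  rw [Cc, Cc, map_sum]
  refine Finset.sum_congr rfl (fun ε _ => ?_)
  rw [map_mul, Complex.conj_ofReal]
  congr 1
  rw [Wt, Wt, map_prod]
  refine Finset.prod_congr rfl (fun i _ => ?_)
  cases hτ : τ i <;> cases hε : ε i <;> simp [wgt]

theorem sum_tau (z : Fin (p + q) → V) :
    ∑ τ : Fin (p + q) → Bool, Cc J p q Q τ z
      = (2 : ℂ) ^ (p + q) * ((B p q Q z : ℝ) : ℂ) := by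
  simp only [Cc]
  rw [Finset.sum_comm]
  have hW : ∀ ε : Fin (p + q) → Bool,
      ∑ τ : Fin (p + q) → Bool, Wt p q τ ε
        = ∏ i, (∑ t : Bool, wgt t (ε i)) := by
    intro ε
    rw [Finset.prod_univ_sum (fun _ => (Finset.univ : Finset Bool)) (fun i t => wgt t (ε i))]
    rw [Fintype.piFinset_univ]
    rfl
  have hmain : ∀ ε : Fin (p + q) → Bool,
      (∑ τ : Fin (p + q) → Bool, Wt p q τ ε * ((B p q Q (zJ J p q ε z) : ℝ) : ℂ))
        = (∏ i, (∑ t : Bool, wgt t (ε i))) * ((B p q Q (zJ J p q ε z) : ℝ) : ℂ) := by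
    intro ε
    rw [← Finset.sum_mul, hW ε]
  rw [Finset.sum_congr rfl (fun ε _ => hmain ε)]
  rw [Finset.sum_eq_single (fun _ => false)]
  · have hz : zJ J p q (fun _ => false) z = z := by
      funext i; simp [zJ]
    rw [hz]
    congr 1
    have hh : ∏ i : Fin (p + q), (∑ t : Bool, wgt t ((fun _ => false) i)) = 2 ^ (p + q) := by
      simp [wgt, Fintype.sum_bool, Finset.prod_const]
    rw [hh]
  · intro ε _ hne
    have : ∃ i, ε i = true := by
      by_contra hcon
      push_neg at hcon
      apply hne
      funext i
      exact (Bool.not_eq_true _).mp (hcon i)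
    obtain ⟨i0, hi0⟩ := this
    rw [Finset.prod_eq_zero (Finset.mem_univ i0)]
    · rw [zero_mul]
    · rw [hi0]
      simp [wgt, Fintype.sum_bool]
  · intro h
    exact absurd (Finset.mem_univ _) h

theorem main (hJ2 : ∀ v, J (J v) = -v) (hpq : p ≠ q)
    (harg : ArgTypeP J p q Q) (hval : ValTypeP J p q Q) (hanti : AntiCommJ J p q Q)
    (hker : totalAlt p q ⇑Q = 0) : Q = 0 := by
  have hall : ∀ (τ : Fin (p + q) → Bool) (z : Fin (p + q) → V), Cc J p q Q τ z = 0 := by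
    intro τ z
    by_contra hC
    rcases tau_corner J p q Q harg hval hanti hJ2 τ z hC with h | h
    · rw [h] at hC
      exact hC (Cc_tst_zero J p q Q hpq harg hval hanti hJ2 hker z)
    · rw [h] at hC
      apply hC
      rw [Cc_conj J p q Q (tst p q) z,
        Cc_tst_zero J p q Q hpq harg hval hanti hJ2 hker z, map_zero]
  have hB : ∀ z, B p q Q z = 0 := by
    intro z
    have hs := sum_tau J p q Q z
    rw [Finset.sum_eq_zero (fun τ _ => hall τ z)] at hs
    have hpow : (2 : ℂ) ^ (p + q) ≠ 0 := pow_ne_zero _ two_ne_zero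
    have hbz : ((B p q Q z : ℝ) : ℂ) = 0 := by
      rcases mul_eq_zero.mp hs.symm with h | h
      · exact absurd h hpow
      · exact h
    exact_mod_cast hbz
  ext v w
  have hb := hB (Fin.append v w)
  rw [B] at hb
  have e1 : (fun i => Fin.append v w (Fin.castAdd q i)) = v := by
    funext i; exact Fin.append_left v w i
  have e2 : (fun j => Fin.append v w (Fin.natAdd p j)) = w := by
    funext j; exact Fin.append_right v w j
  rw [e1, e2] at hb
  simpa using hb

end TotalAltAux

theorem totalAlt_injective_on_antiCommJ
    {n : ℕ} (hdim : Module.finrank ℝ V = 2 * n)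
    (J : V →ₗ[ℝ] V) (hJ2 : ∀ v, J (J v) = -v)
    (hJg : ∀ u v : V, ⟪J u, J v⟫ = ⟪u, v⟫)
    (p q : ℕ) (hpq : p ≠ q)
    (Q : AlternatingMap ℝ V (AlternatingMap ℝ V ℝ (Fin q)) (Fin p))
    (harg : ArgTypeP J p q Q) (hval : ValTypeP J p q Q) (hanti : AntiCommJ J p q Q)
    (hker : totalAlt p q ⇑Q = 0) :
    Q = 0 :=
  TotalAltAux.main J p q Q hJ2 hpq harg hval hanti hker
end
end

section
/- Let A be a smooth field of skew-symmetric endomorphisms on a connected manifold M such that Tr(A^{2k}) is a constant function on M for every positive integer k, and such that A² satisfies a fixed polynomial with simple real roots. Then the eigenvalues of A² are constant on M and the eigenbundles of A² have constant rank. -/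
/-!
STATEMENT 13: let `A` be a field of skew-symmetric endomorphisms on a connected
manifold `M` such that `Tr(A^{2k})` is constant on `M` for every positive integer `k`,
and such that `A²` satisfies a fixed polynomial with simple real roots.  Then the
eigenvalues of `A²` are constant on `M` and the eigenbundles of `A²` have constant rank.
-/

noncomputable section
open scoped RealInnerProductSpace

open Polynomial Module

/-- A product of distinct linear factors divides any polynomial vanishing at the roots. -/
lemma prod_X_sub_C_dvd_of_vanishes (s : Finset ℝ) (p : ℝ[X])
    (h : ∀ μ ∈ s, p.eval μ = 0) :
    (∏ μ ∈ s, (X - C μ)) ∣ p := by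
  classical
  induction s using Finset.induction_on with
  | empty => simpa using dvd_refl p
  | @insert a t ha ih =>
    obtain ⟨q, hq⟩ := ih fun μ hμ => h μ (Finset.mem_insert_of_mem hμ)
    have hevala : p.eval a = 0 := h a (Finset.mem_insert_self a t)
    have hprod : (∏ μ ∈ t, (X - C μ)).eval a ≠ 0 := by
      rw [Polynomial.eval_prod]
      refine Finset.prod_ne_zero_iff.mpr fun μ hμ => ?_
      simp only [Polynomial.eval_sub, Polynomial.eval_X, Polynomial.eval_C, sub_ne_zero]
      rintro rfl; exact ha hμ
    have hqa : q.eval a = 0 := by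
      have := hevala
      rw [hq, Polynomial.eval_mul] at this
      exact (mul_eq_zero.mp this).resolve_left hprod
    obtain ⟨r, hr⟩ := (Polynomial.dvd_iff_isRoot).mpr hqa
    rw [Finset.prod_insert ha, hq, hr]
    ring_nf
    exact Dvd.intro r (by ring)

/-- Evaluation of `aeval f p` on an eigenvector (allowing zero vectors). -/
lemma aeval_apply_of_mem_eigenspace {E' : Type*} [AddCommGroup E'] [Module ℝ E']
    {f : Module.End ℝ E'} {μ : ℝ} {v : E'} (hv : v ∈ Module.End.eigenspace f μ) (p : ℝ[X]) :
    Polynomial.aeval f p v = p.eval μ • v := by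
  by_cases hv0 : v = 0
  · simp [hv0]
  · exact Module.End.aeval_apply_of_hasEigenvector ⟨hv, hv0⟩

theorem eigenvalues_constant_of_constant_traces
    (M : Type*) [TopologicalSpace M] [ConnectedSpace M]
    (E : Type*) [NormedAddCommGroup E] [InnerProductSpace ℝ E] [FiniteDimensional ℝ E]
    (A : M → E →ₗ[ℝ] E)
    (hskew : ∀ x (u v : E), ⟪A x u, v⟫ = -⟪u, A x v⟫)
    (htrace : ∀ k : ℕ, 0 < k → ∃ c : ℝ, ∀ x, LinearMap.trace ℝ E ((A x) ^ (2 * k)) = c)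
    (s : Finset ℝ)
    (hpoly : ∀ x, Polynomial.aeval ((A x) ^ 2)
      (∏ μ ∈ s, (Polynomial.X - Polynomial.C μ)) = 0) :
    ∀ (μ : ℝ) (x y : M),
      (Module.End.HasEigenvalue ((A x) ^ 2) μ ↔ Module.End.HasEigenvalue ((A y) ^ 2) μ) ∧
      Module.finrank ℝ (Module.End.eigenspace ((A x) ^ 2) μ)
        = Module.finrank ℝ (Module.End.eigenspace ((A y) ^ 2) μ) := by
  classical
  intro μ x y
  set f : M → Module.End ℝ E := fun x => (A x) ^ 2 with hf
  -- Key: the finrank equality; the eigenvalue iff follows from it.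
  suffices hrank : ∀ μ : ℝ, Module.finrank ℝ (Module.End.eigenspace (f x) μ)
      = Module.finrank ℝ (Module.End.eigenspace (f y) μ) by
    refine ⟨?_, hrank μ⟩
    have key : ∀ z w : M, Module.End.HasEigenvalue (f z) μ →
        (∀ ν : ℝ, Module.finrank ℝ (Module.End.eigenspace (f z) ν)
          = Module.finrank ℝ (Module.End.eigenspace (f w) ν)) →
        Module.End.HasEigenvalue (f w) μ := by
      intro z w hz hzw
      rw [Module.End.hasEigenvalue_iff] at hz ⊢
      intro hbot
      apply hz
      rw [← Submodule.finrank_eq_zero (R := ℝ)] at hbot ⊢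
      rw [hzw μ, hbot]
    exact ⟨fun h => key x y h hrank, fun h => key y x h fun ν => (hrank ν).symm⟩
  intro μ
  -- Case 1: μ is not a root of the polynomial: both eigenspaces are trivial.
  by_cases hμs : μ ∈ s
  · -- μ ∈ s : use the Lagrange projection.
    set L : ℝ[X] := Lagrange.basis s id μ with hL
    have hinj : Set.InjOn (id : ℝ → ℝ) s := Set.injOn_id _
    have hLself : L.eval μ = 1 := Lagrange.eval_basis_self hinj hμs
    have hLne : ∀ ν ∈ s, ν ≠ μ → L.eval ν = 0 := by
      intro ν hν hne
      exact Lagrange.eval_basis_of_ne (v := id) (fun h => hne h.symm) hν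
    -- For each point z, `aeval (f z) L` is a projection onto the eigenspace.
    have hproj : ∀ z : M, LinearMap.IsProj (Module.End.eigenspace (f z) μ)
        (Polynomial.aeval (f z) L) := by
      intro z
      constructor
      · -- maps into the eigenspace
        intro u
        rw [Module.End.mem_eigenspace_iff]
        have hdvd : (∏ ν ∈ s, (X - C ν)) ∣ (X - C μ) * L := by
          apply prod_X_sub_C_dvd_of_vanishes
          intro ν hν
          by_cases hne : ν = μ
          · subst hne; simp
          · simp [hLne ν hν hne]
        obtain ⟨q, hq⟩ := hdvd
        have h0 : Polynomial.aeval (f z) ((X - C μ) * L) = 0 := by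
          rw [hq, map_mul, hpoly z, zero_mul]
        have := congrArg (fun g : Module.End ℝ E => g u) h0
        simp only [map_mul, Polynomial.aeval_X, Polynomial.aeval_C, map_sub,
          Module.End.mul_apply, LinearMap.sub_apply, LinearMap.zero_apply] at this
        have halg : ∀ v : E, (Polynomial.aeval (f z) (C μ)) v = μ • v := by
          intro v; simp [Module.algebraMap_end_apply]
        rw [sub_eq_zero] at this
        rw [this]
        simp [Module.algebraMap_end_apply]
      · -- identity on the eigenspace
        intro v hv
        rw [aeval_apply_of_mem_eigenspace hv, hLself, one_smul]
    -- traces of the projections agree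
    have htr : LinearMap.trace ℝ E (Polynomial.aeval (f x) L)
        = LinearMap.trace ℝ E (Polynomial.aeval (f y) L) := by
      rw [Polynomial.aeval_eq_sum_range (x := f x), Polynomial.aeval_eq_sum_range (x := f y),
        map_sum, map_sum]
      refine Finset.sum_congr rfl fun i _ => ?_
      rw [map_smul, map_smul]
      congr 1
      rcases Nat.eq_zero_or_pos i with hi | hi
      · subst hi; simp
      · obtain ⟨c, hc⟩ := htrace i hi
        have hx' : f x ^ i = A x ^ (2 * i) := by rw [hf, ← pow_mul]
        have hy' : f y ^ i = A y ^ (2 * i) := by rw [hf, ← pow_mul]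
        rw [hx', hy', hc x, hc y]
    -- trace of projection = finrank of eigenspace
    have hx := (hproj x).trace
    have hy := (hproj y).trace
    have : (Module.finrank ℝ (Module.End.eigenspace (f x) μ) : ℝ)
        = (Module.finrank ℝ (Module.End.eigenspace (f y) μ) : ℝ) := by
      rw [← hx, ← hy, htr]
    exact_mod_cast this
  · -- μ ∉ s : eigenspaces are ⊥
    have hbot : ∀ z : M, Module.End.eigenspace (f z) μ = ⊥ := by
      intro z
      rw [Submodule.eq_bot_iff]
      intro v hv
      have h0 : Polynomial.aeval (f z) (∏ ν ∈ s, (X - C ν)) v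
          = ((∏ ν ∈ s, (X - C ν)).eval μ) • v := aeval_apply_of_mem_eigenspace hv _
      rw [hpoly z] at h0
      have hne : (∏ ν ∈ s, (X - C ν)).eval μ ≠ 0 := by
        rw [Polynomial.eval_prod]
        refine Finset.prod_ne_zero_iff.mpr fun ν hν => ?_
        simp only [Polynomial.eval_sub, Polynomial.eval_X, Polynomial.eval_C, sub_ne_zero]
        rintro rfl; exact hμs hν
      have := h0.symm
      simp only [LinearMap.zero_apply] at this
      rcases smul_eq_zero.mp this with h | h
      · exact absurd h hne
      · exact h
    rw [hbot x, hbot y]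
end
end
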